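/- Let n ≥ 3 be an integer, t < 0 a rational number that is not a square in ℚ, and β₁ = a + b√t with a, b ∈ ℚ and b ≠ 0, so that ℚ(β₁) is an imaginary quadratic field; let β₂ = a − b√t be the complex conjugate of β₁. Let γ₁ be a nonzero element of ℚ(β₁) and γ₂ its complex conjugate, so that F(x) = γ₁(x−β₁)ⁿ + γ₂(x−β₂)ⁿ lies in ℚ[x]. Then all n roots of F(x) are real. -/

import Mathlib

noncomputable section

/-- Principal branch square root: for `w = s·e^{iφ}` with `-π < φ ≤ π`,
`csqrt w = s^{1/2}·e^{iφ/2}`. -/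
noncomputable def csqrt (w : ℂ) : ℂ := w ^ ((2 : ℂ))⁻¹

/-- **Lemma 5(a) of the paper**: in the imaginary quadratic case, all `n` roots of
`F(x) = γ₁(x-β₁)ⁿ + γ₂(x-β₂)ⁿ` are real. -/
theorem roots_real_imag_quadratic_case
    (n : ℕ) (hn : 3 ≤ n)
    (t : ℚ) (ht : t < 0) (hts : ¬∃ s : ℚ, s ^ 2 = t)
    (a b : ℚ) (hb : b ≠ 0)
    (β₁ β₂ : ℂ)
    (hβ₁ : β₁ = (a : ℂ) + (b : ℂ) * csqrt (t : ℂ))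
    (hβ₂ : β₂ = (a : ℂ) - (b : ℂ) * csqrt (t : ℂ))
    (γ₁ γ₂ : ℂ) (hγ₁0 : γ₁ ≠ 0)
    (hγ₁mem : ∃ e f : ℚ, γ₁ = (e : ℂ) + (f : ℂ) * β₁)
    (hγ₂ : γ₂ = (starRingEnd ℂ) γ₁)
    (F : ℂ → ℂ) (hF : F = fun z => γ₁ * (z - β₁) ^ n + γ₂ * (z - β₂) ^ n) :
    ∀ z : ℂ, F z = 0 → z.im = 0 := by
  set c : ℂ := csqrt (t : ℂ) with hc
  have hc2 : c ^ 2 = (t : ℂ) := by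
    rw [hc]
    unfold csqrt
    rw [show ((2:ℂ))⁻¹ = (((2:ℕ):ℂ))⁻¹ by norm_num]
    exact Complex.cpow_nat_inv_pow _ two_ne_zero
  have htR : (t : ℝ) < 0 := by exact_mod_cast ht
  have hre : (c ^ 2).re = (t : ℝ) := by rw [hc2]; simp
  have him : (c ^ 2).im = 0 := by rw [hc2]; simp
  rw [pow_two, Complex.mul_re] at hre
  rw [pow_two, Complex.mul_im] at him
  have hcim : c.im ≠ 0 := by
    intro h
    rw [h] at hre
    nlinarith [sq_nonneg c.re]
  have hcre : c.re = 0 := by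
    have h0 : c.re * c.im = 0 := by nlinarith
    rcases mul_eq_zero.mp h0 with h | h
    · exact h
    · exact absurd h hcim
  have hbR : (b : ℝ) ≠ 0 := by exact_mod_cast hb
  intro z hz
  rw [hF] at hz
  simp only at hz
  have habs : ‖γ₁‖ * ‖z - β₁‖ ^ n
      = ‖γ₁‖ * ‖z - β₂‖ ^ n := by
    have h1 : γ₁ * (z - β₁) ^ n = -(γ₂ * (z - β₂) ^ n) := by linear_combination hz
    have := congrArg norm h1
    simpa [norm_mul, norm_pow, norm_neg, Complex.norm_conj, hγ₂] using this
  have habs' : ‖z - β₁‖ ^ n = ‖z - β₂‖ ^ n :=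
    mul_left_cancel₀ (by simpa using hγ₁0) habs
  have heq : ‖z - β₁‖ = ‖z - β₂‖ := by
    have hn0 : n ≠ 0 := by omega
    exact (pow_left_strictMonoOn₀ hn0).injOn (norm_nonneg _) (norm_nonneg _) habs'
  have hns : Complex.normSq (z - β₁) = Complex.normSq (z - β₂) := by
    have := congrArg (fun r => r ^ 2) heq
    simpa [Complex.sq_norm] using this
  simp only [Complex.normSq_apply, hβ₁, hβ₂, Complex.sub_re, Complex.sub_im,
    Complex.add_re, Complex.add_im, Complex.mul_re, Complex.mul_im,
    Complex.ratCast_re, Complex.ratCast_im, hcre] at hns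
  have : z.im * ((b : ℝ) * c.im) = 0 := by nlinarith
  rcases mul_eq_zero.mp this with h | h
  · exact h
  · exact absurd h (mul_ne_zero hbR hcim)
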